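/- Fix ν₁ > 0 and ν₂ > 4 and let π(x) = (ν₁/ν₂)^{ν₁/2} x^{ν₁/2 − 1} / ( B(ν₁/2, ν₂/2) (1 + (ν₁/ν₂)x)^{(ν₁+ν₂)/2} ) for x ∈ (0, ∞) (the Fisher–Snedecor F density). Then its first moment is m₁ = ν₂/(ν₂ − 2), its variance is m₂ − m₁² = 2ν₂²(ν₁ + ν₂ − 2)/(ν₁ (ν₂ − 2)² (ν₂ − 4)); for the variance function σ²(x)/2 = x(1 + (ν₁/ν₂)x) the average variance is σ̂²/2 = ν₂(ν₁ + ν₂ − 2)/((ν₂ − 2)(ν₂ − 4)), and hence the optimal convergence rate is σ̂²/(2(m₂ − m₁²)) = ν₁(ν₂ − 2)/(2ν₂); moreover the detailed-balance drift μ(x) = (1/(2π(x)))(d/dx)(σ²(x)π(x)) is the affine function μ(x) = ν₁/2 − ν₁(1/2 − 1/ν₂)·x. -/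

import Mathlib

open MeasureTheory Set

lemma rpow_split {x : ℝ} (hx : 0 < x) (s t : ℝ) (h : s = t + 1) : x ^ s = x ^ t * x := by
  rw [h, Real.rpow_add hx, Real.rpow_one]

lemma realBeta {a b : ℝ} (ha : 0 < a) (hb : 0 < b) :
    ∫ t in (0:ℝ)..1, t ^ (a-1) * (1-t) ^ (b-1)
      = Real.Gamma a * Real.Gamma b / Real.Gamma (a+b) := by
  have hC := Complex.Gamma_mul_Gamma_eq_betaIntegral
    (s := (a:ℂ)) (t := (b:ℂ)) (by simpa using ha) (by simpa using hb)
  have hint : Complex.betaIntegral (a:ℂ) (b:ℂ)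
      = ((∫ t in (0:ℝ)..1, t ^ (a-1) * (1-t) ^ (b-1) : ℝ) : ℂ) := by
    rw [Complex.betaIntegral, ← intervalIntegral.integral_ofReal]
    refine intervalIntegral.integral_congr fun t ht => ?_
    rw [Set.uIcc_of_le (by norm_num : (0:ℝ) ≤ 1)] at ht
    rw [Complex.ofReal_mul, Complex.ofReal_cpow ht.1,
      Complex.ofReal_cpow (by linarith [ht.2] : (0:ℝ) ≤ 1 - t)]
    push_cast
    ring
  rw [hint] at hC
  rw [show (a:ℂ)+(b:ℂ) = ((a+b:ℝ):ℂ) by push_cast; ring, Complex.Gamma_ofReal,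
    Complex.Gamma_ofReal, Complex.Gamma_ofReal, ← Complex.ofReal_mul,
    ← Complex.ofReal_mul] at hC
  have h2 := Complex.ofReal_injective hC
  have hG : (0:ℝ) < Real.Gamma (a+b) := Real.Gamma_pos_of_pos (by linarith)
  field_simp
  linarith [h2]

lemma keyInt {a b : ℝ} (ha : 0 < a) (hb : 0 < b) :
    ∫ x in Ioi (0:ℝ), x ^ (a-1) * (1 + x) ^ (-(a+b))
      = Real.Gamma a * Real.Gamma b / Real.Gamma (a+b) := by
  have himg : (fun t => t / (1 - t)) '' Ioo (0:ℝ) 1 = Ioi (0:ℝ) := by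
    ext y
    constructor
    · rintro ⟨t, ⟨ht0, ht1⟩, rfl⟩
      exact div_pos ht0 (by linarith)
    · intro hy
      refine ⟨y / (1 + y), ⟨div_pos hy (by linarith [mem_Ioi.1 hy]), ?_⟩, ?_⟩
      · rw [div_lt_one (by linarith [mem_Ioi.1 hy])]; linarith [mem_Ioi.1 hy]
      · have h1y : (0:ℝ) < 1 + y := by linarith [mem_Ioi.1 hy]
        field_simp
        ring
  have hderiv : ∀ t ∈ Ioo (0:ℝ) 1, HasDerivWithinAt (fun t => t / (1 - t))
      (((1 - t) ^ 2)⁻¹) (Ioo (0:ℝ) 1) t := by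
    intro t ht
    have h1t : (1:ℝ) - t ≠ 0 := by have := ht.2; intro h; rw [sub_eq_zero] at h; linarith
    have hin : HasDerivAt (fun y : ℝ => (1 - y)⁻¹) (-(0 - 1) / (1 - t) ^ 2) t := by
      exact (((hasDerivAt_const t (1:ℝ)).sub (hasDerivAt_id t)).inv h1t)
    have h : HasDerivAt (fun t : ℝ => t * (1 - t)⁻¹)
        (1 * (1 - t)⁻¹ + t * (-(0 - 1) / (1 - t) ^ 2)) t :=
      (hasDerivAt_id t).mul hin
    have h2 : (1 : ℝ) * (1 - t)⁻¹ + t * (-(0 - 1) / (1 - t) ^ 2) = ((1 - t) ^ 2)⁻¹ := by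
      field_simp
      ring
    rw [h2] at h
    exact (h.congr_of_eventuallyEq (by filter_upwards with y; rw [div_eq_mul_inv])).hasDerivWithinAt
  have hinj : InjOn (fun t => t / (1 - t)) (Ioo (0:ℝ) 1) := by
    rintro t1 ⟨h10, h11⟩ t2 ⟨h20, h21⟩ h
    have e1 : (1:ℝ) - t1 ≠ 0 := by intro h'; linarith [sub_eq_zero.1 h']
    have e2 : (1:ℝ) - t2 ≠ 0 := by intro h'; linarith [sub_eq_zero.1 h']
    field_simp at h
    nlinarith [h]
  rw [← himg, integral_image_eq_integral_abs_deriv_smul measurableSet_Ioo hderiv hinj]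
  have hcongr : ∀ t ∈ Ioo (0:ℝ) 1,
      |((1 - t) ^ 2)⁻¹| • ((t / (1 - t)) ^ (a-1) * (1 + t / (1 - t)) ^ (-(a+b)))
        = t ^ (a-1) * (1 - t) ^ (b-1) := by
    intro t ⟨ht0, ht1⟩
    have h1t : (0:ℝ) < 1 - t := by linarith
    have e0 : (1:ℝ) + t / (1 - t) = (1 - t)⁻¹ := by field_simp; ring
    have e1 : (t / (1 - t)) ^ (a-1) = t ^ (a-1) / (1 - t) ^ (a-1) :=
      Real.div_rpow ht0.le h1t.le _
    have e2 : ((1 - t)⁻¹) ^ (-(a+b)) = (1 - t) ^ (a+b) := by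
      rw [Real.inv_rpow h1t.le, Real.rpow_neg h1t.le, inv_inv]
    have e3 : (1 - t) ^ (a+b) = (1 - t) ^ (a-1) * ((1 - t) ^ (b-1) * (1 - t) ^ (2:ℝ)) := by
      rw [← Real.rpow_add h1t, ← Real.rpow_add h1t]; ring_nf
    have e4 : (1 - t) ^ ((2:ℝ)) = (1 - t) ^ (2:ℕ) := by
      rw [show ((2:ℝ)) = ((2:ℕ):ℝ) by norm_num, Real.rpow_natCast]
    have hA : (1 - t) ^ (a-1) ≠ 0 := (Real.rpow_pos_of_pos h1t _).ne'
    have hB : ((1 - t):ℝ) ^ (2:ℕ) ≠ 0 := pow_ne_zero _ h1t.ne'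
    rw [smul_eq_mul, e0, e1, e2, e3, e4, abs_of_nonneg (by positivity)]
    field_simp
  rw [setIntegral_congr_fun measurableSet_Ioo hcongr, ← integral_Ioc_eq_integral_Ioo,
    ← intervalIntegral.integral_of_le (by norm_num : (0:ℝ) ≤ 1)]
  exact realBeta ha hb



lemma keyIntC {a b c : ℝ} (ha : 0 < a) (hb : 0 < b) (hc : 0 < c) :
    ∫ x in Ioi (0:ℝ), x ^ (a-1) * (1 + c*x) ^ (-(a+b))
      = c ^ (-a) * (Real.Gamma a * Real.Gamma b / Real.Gamma (a+b)) := by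
  have h1 := MeasureTheory.integral_comp_mul_left_Ioi
    (fun x => x ^ (a-1) * (1 + x) ^ (-(a+b))) 0 hc
  simp only [mul_zero, smul_eq_mul] at h1
  rw [keyInt ha hb] at h1
  have h2 : ∫ x in Ioi (0:ℝ), (c*x) ^ (a-1) * (1 + c*x) ^ (-(a+b))
      = c ^ (a-1) * ∫ x in Ioi (0:ℝ), x ^ (a-1) * (1 + c*x) ^ (-(a+b)) := by
    rw [← MeasureTheory.integral_const_mul]
    refine setIntegral_congr_fun measurableSet_Ioi fun x hx => ?_
    rw [Real.mul_rpow hc.le (le_of_lt hx)]; ring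
  rw [h2] at h1
  have hca : c ^ (a-1) ≠ 0 := (Real.rpow_pos_of_pos hc _).ne'
  have hd : c ^ (1-a) * c ^ (a-1) = 1 := by
    rw [← Real.rpow_add hc, show (1:ℝ)-a + (a-1) = 0 by ring, Real.rpow_zero]
  calc ∫ x in Ioi (0:ℝ), x ^ (a-1) * (1 + c*x) ^ (-(a+b))
      = (c ^ (1-a) * c ^ (a-1)) * ∫ x in Ioi (0:ℝ), x ^ (a-1) * (1 + c*x) ^ (-(a+b)) := by
        rw [hd, one_mul]
    _ = c ^ (1-a) * (c ^ (a-1) * ∫ x in Ioi (0:ℝ), x ^ (a-1) * (1 + c*x) ^ (-(a+b))) := by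
        ring
    _ = c ^ (1-a) * (c⁻¹ * (Real.Gamma a * Real.Gamma b / Real.Gamma (a+b))) := by rw [h1]
    _ = (c ^ (1-a) * c ^ (-1:ℝ)) * (Real.Gamma a * Real.Gamma b / Real.Gamma (a+b)) := by
        rw [Real.rpow_neg_one]; ring
    _ = c ^ (-a) * (Real.Gamma a * Real.Gamma b / Real.Gamma (a+b)) := by
        rw [← Real.rpow_add hc, show (1:ℝ)-a + -1 = -a by ring]

set_option maxHeartbeats 2000000 in
/-- For the Fisher–Snedecor `F` density (`ν₁ > 0`, `ν₂ > 4`)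
`ρ(x) = (ν₁/ν₂)^{ν₁/2} x^{ν₁/2-1} / (B(ν₁/2, ν₂/2) (1+(ν₁/ν₂)x)^{(ν₁+ν₂)/2})` on
`(0, ∞)`: its first moment is `m₁ = ν₂/(ν₂-2)`, its variance is
`m₂ - m₁² = 2ν₂²(ν₁+ν₂-2)/(ν₁(ν₂-2)²(ν₂-4))`; for the variance function
`σ²(x)/2 = x(1+(ν₁/ν₂)x)` the average variance is
`σ̂²/2 = ν₂(ν₁+ν₂-2)/((ν₂-2)(ν₂-4))`, hence the optimal rate is
`σ̂²/(2(m₂-m₁²)) = ν₁(ν₂-2)/(2ν₂)`; moreover the detailed-balance drift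
`μ(x) = (1/(2ρ(x)))(d/dx)(σ²(x)ρ(x))` is the affine function
`μ(x) = ν₁/2 - ν₁(1/2 - 1/ν₂)x`. -/
theorem statement16
    (ν₁ ν₂ : ℝ) (h₁ : 0 < ν₁) (h₂ : 4 < ν₂)
    (B : ℝ → ℝ → ℝ)
    (hB : ∀ a b, B a b = Real.Gamma a * Real.Gamma b / Real.Gamma (a + b))
    (ρ : ℝ → ℝ)
    (hρ : ∀ x, ρ x = (ν₁ / ν₂) ^ (ν₁ / 2) * x ^ (ν₁ / 2 - 1) /
        (B (ν₁ / 2) (ν₂ / 2) * (1 + ν₁ / ν₂ * x) ^ ((ν₁ + ν₂) / 2))) :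
    (∫ x in Set.Ioi (0 : ℝ), x * ρ x) = ν₂ / (ν₂ - 2) ∧
    (∫ x in Set.Ioi (0 : ℝ), x ^ 2 * ρ x) - (∫ x in Set.Ioi (0 : ℝ), x * ρ x) ^ 2
        = 2 * ν₂ ^ 2 * (ν₁ + ν₂ - 2) / (ν₁ * (ν₂ - 2) ^ 2 * (ν₂ - 4)) ∧
    (∫ x in Set.Ioi (0 : ℝ), x * (1 + ν₁ / ν₂ * x) * ρ x)
        = ν₂ * (ν₁ + ν₂ - 2) / ((ν₂ - 2) * (ν₂ - 4)) ∧
    (∫ x in Set.Ioi (0 : ℝ), x * (1 + ν₁ / ν₂ * x) * ρ x) /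
        ((∫ x in Set.Ioi (0 : ℝ), x ^ 2 * ρ x) - (∫ x in Set.Ioi (0 : ℝ), x * ρ x) ^ 2)
        = ν₁ * (ν₂ - 2) / (2 * ν₂) ∧
    ∀ x ∈ Set.Ioi (0 : ℝ),
      1 / (2 * ρ x) * deriv (fun y => 2 * (y * (1 + ν₁ / ν₂ * y)) * ρ y) x
        = ν₁ / 2 - ν₁ * (1 / 2 - 1 / ν₂) * x := by
  set a := ν₁ / 2 with hadef
  set b := ν₂ / 2 with hbdef
  set c := ν₁ / ν₂ with hcdef
  have hν₂ : (0:ℝ) < ν₂ := by linarith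
  have ha : 0 < a := by positivity
  have hb : 2 < b := by rw [hbdef]; linarith
  have hc : 0 < c := by positivity
  clear_value a b c
  set Bv := B a b with hBvdef
  have hBv : Bv = Real.Gamma a * Real.Gamma b / Real.Gamma (a+b) := hB a b
  clear_value Bv
  have hGa : 0 < Real.Gamma a := Real.Gamma_pos_of_pos ha
  have hGb : 0 < Real.Gamma b := Real.Gamma_pos_of_pos (by linarith)
  have hGb1 : 0 < Real.Gamma (b-1) := Real.Gamma_pos_of_pos (by linarith)
  have hGb2 : 0 < Real.Gamma (b-2) := Real.Gamma_pos_of_pos (by linarith)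
  have hGab : 0 < Real.Gamma (a+b) := Real.Gamma_pos_of_pos (by linarith)
  have hGab1 : 0 < Real.Gamma (a+b-1) := Real.Gamma_pos_of_pos (by linarith)
  have hBvpos : 0 < Bv := by rw [hBv]; positivity
  have ga1 : Real.Gamma (a+1) = a * Real.Gamma a := Real.Gamma_add_one ha.ne'
  have gb1 : Real.Gamma b = (b-1) * Real.Gamma (b-1) := by
    have h := Real.Gamma_add_one (s := b-1) (by intro h; rw [sub_eq_zero] at h; linarith)
    rwa [show b-1+1 = b by ring] at h
  have gb2 : Real.Gamma (b-1) = (b-2) * Real.Gamma (b-2) := by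
    have h := Real.Gamma_add_one (s := b-2) (by intro h; rw [sub_eq_zero] at h; linarith)
    rwa [show b-2+1 = b-1 by ring] at h
  have gab : Real.Gamma (a+b) = (a+b-1) * Real.Gamma (a+b-1) := by
    have h := Real.Gamma_add_one (s := a+b-1) (by intro h; rw [sub_eq_zero] at h; linarith)
    rwa [show a+b-1+1 = a+b by ring] at h
  have hρ' : ∀ x, ρ x = c ^ a * x ^ (a-1) / (Bv * (1 + c*x) ^ (a+b)) := by
    intro x
    rw [hρ x, show (ν₁+ν₂)/2 = a + b by rw [hadef, hbdef]; ring]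
  -- first moment
  have A1 : (∫ x in Set.Ioi (0 : ℝ), x * ρ x) = ν₂ / (ν₂ - 2) := by
    have congr1 : ∀ x ∈ Ioi (0:ℝ), x * ρ x
        = c ^ a / Bv * (x ^ ((a+1)-1) * (1 + c*x) ^ (-((a+1)+(b-1)))) := by
      intro x hx
      have hx0 : (0:ℝ) < x := hx
      have hpx : (0:ℝ) < 1 + c*x := by positivity
      rw [hρ' x, show (a+1)+(b-1) = a+b by ring, Real.rpow_neg hpx.le,
        show a+1-1 = 1+(a-1) by ring, Real.rpow_add hx0, Real.rpow_one]
      have h1 : (1 + c*x) ^ (a+b) ≠ 0 := (Real.rpow_pos_of_pos hpx _).ne'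
      field_simp
    rw [setIntegral_congr_fun measurableSet_Ioi congr1, MeasureTheory.integral_const_mul,
      keyIntC (by linarith : (0:ℝ) < a+1) (by linarith : (0:ℝ) < b-1) hc,
      show (a+1)+(b-1) = a+b by ring, ga1, hBv, gb1]
    have hc1 : c ^ a * c ^ (-(a+1)) = c⁻¹ := by
      rw [← Real.rpow_add hc, show a + -(a+1) = -1 by ring, Real.rpow_neg_one]
    rw [div_mul_eq_mul_div, ← mul_assoc, hc1]
    have hb1 : b - 1 ≠ 0 := by intro h; rw [sub_eq_zero] at h; linarith
    have h2 : ν₂ - 2 ≠ 0 := by intro h; rw [sub_eq_zero] at h; linarith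
    refine Eq.trans (b := a / (c * (b-1))) ?_ ?_
    · field_simp
    · rw [hadef, hbdef, hcdef, div_eq_div_iff
        (mul_pos (div_pos h₁ hν₂) (by linarith : (0:ℝ) < ν₂/2 - 1)).ne' h2]
      field_simp
  -- second moment
  have A2 : (∫ x in Set.Ioi (0 : ℝ), x ^ 2 * ρ x)
      = ν₂ ^ 2 * (ν₁ + 2) / (ν₁ * (ν₂ - 2) * (ν₂ - 4)) := by
    have congr2 : ∀ x ∈ Ioi (0:ℝ), x ^ 2 * ρ x
        = c ^ a / Bv * (x ^ ((a+2)-1) * (1 + c*x) ^ (-((a+2)+(b-2)))) := by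
      intro x hx
      have hx0 : (0:ℝ) < x := hx
      have hpx : (0:ℝ) < 1 + c*x := by positivity
      rw [hρ' x, show (a+2)+(b-2) = a+b by ring, Real.rpow_neg hpx.le,
        show a+2-1 = 1+(1+(a-1)) by ring, Real.rpow_add hx0, Real.rpow_add hx0,
        Real.rpow_one]
      have h1 : (1 + c*x) ^ (a+b) ≠ 0 := (Real.rpow_pos_of_pos hpx _).ne'
      field_simp
    rw [setIntegral_congr_fun measurableSet_Ioi congr2, MeasureTheory.integral_const_mul,
      keyIntC (by linarith : (0:ℝ) < a+2) (by linarith : (0:ℝ) < b-2) hc,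
      show (a+2)+(b-2) = a+b by ring, hBv, gb1, gb2]
    have ga2 : Real.Gamma (a+2) = (a+1) * (a * Real.Gamma a) := by
      have h := Real.Gamma_add_one (s := a+1) (by positivity)
      rw [show a+1+1 = a+2 by ring, ga1] at h
      exact h
    rw [ga2]
    have hc2 : c ^ a * c ^ (-(a+2)) = (c^(2:ℕ))⁻¹ := by
      rw [← Real.rpow_add hc, show a + -(a+2) = -(2:ℝ) by ring, Real.rpow_neg hc.le,
        show ((2:ℝ)) = ((2:ℕ):ℝ) by norm_num, Real.rpow_natCast]
    rw [div_mul_eq_mul_div, ← mul_assoc, hc2]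
    have hb1 : b - 1 ≠ 0 := by intro h; rw [sub_eq_zero] at h; linarith
    have hb2' : b - 2 ≠ 0 := by intro h; rw [sub_eq_zero] at h; linarith
    have h2 : ν₂ - 2 ≠ 0 := by intro h; rw [sub_eq_zero] at h; linarith
    have h4 : ν₂ - 4 ≠ 0 := by intro h; rw [sub_eq_zero] at h; linarith
    refine Eq.trans (b := a * (a+1) / (c^(2:ℕ) * ((b-1) * (b-2)))) ?_ ?_
    · field_simp
    · rw [hadef, hbdef, hcdef, div_eq_div_iff
        (mul_pos (pow_pos (div_pos h₁ hν₂) 2)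
          (mul_pos (by linarith : (0:ℝ) < ν₂/2 - 1) (by linarith : (0:ℝ) < ν₂/2 - 2))).ne'
        (mul_ne_zero (mul_ne_zero h₁.ne' h2) h4)]
      field_simp
      ring
  -- average variance integral
  have A3 : (∫ x in Set.Ioi (0 : ℝ), x * (1 + c * x) * ρ x)
      = ν₂ * (ν₁ + ν₂ - 2) / ((ν₂ - 2) * (ν₂ - 4)) := by
    have congr3 : ∀ x ∈ Ioi (0:ℝ), x * (1 + c * x) * ρ x
        = c ^ a / Bv * (x ^ ((a+1)-1) * (1 + c*x) ^ (-((a+1)+(b-2)))) := by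
      intro x hx
      have hx0 : (0:ℝ) < x := hx
      have hpx : (0:ℝ) < 1 + c*x := by positivity
      rw [hρ' x, show -((a+1)+(b-2)) = -((a+b)-1) by ring, Real.rpow_neg hpx.le,
        show a+1-1 = 1+(a-1) by ring, Real.rpow_add hx0, Real.rpow_one]
      have e2 : (1 + c*x) ^ (a+b) = (1 + c*x) ^ (a+b-1) * (1 + c*x) := by
        rw [← Real.rpow_add_one hpx.ne' (a+b-1), show a+b-1+1 = a+b by ring]
      rw [e2]
      have h1 : (1 + c*x) ^ (a+b-1) ≠ 0 := (Real.rpow_pos_of_pos hpx _).ne'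
      field_simp
    rw [setIntegral_congr_fun measurableSet_Ioi congr3, MeasureTheory.integral_const_mul,
      keyIntC (by linarith : (0:ℝ) < a+1) (by linarith : (0:ℝ) < b-2) hc,
      show (a+1)+(b-2) = a+b-1 by ring, ga1, hBv, gb1, gb2, gab]
    have hc1 : c ^ a * c ^ (-(a+1)) = c⁻¹ := by
      rw [← Real.rpow_add hc, show a + -(a+1) = -1 by ring, Real.rpow_neg_one]
    rw [div_mul_eq_mul_div, ← mul_assoc, hc1]
    have hb1 : b - 1 ≠ 0 := by intro h; rw [sub_eq_zero] at h; linarith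
    have hb2' : b - 2 ≠ 0 := by intro h; rw [sub_eq_zero] at h; linarith
    have hab1 : a + b - 1 ≠ 0 := by intro h; rw [sub_eq_zero] at h; nlinarith
    have h2 : ν₂ - 2 ≠ 0 := by intro h; rw [sub_eq_zero] at h; linarith
    have h4 : ν₂ - 4 ≠ 0 := by intro h; rw [sub_eq_zero] at h; linarith
    refine Eq.trans (b := a * (a+b-1) / (c * ((b-1) * (b-2)))) ?_ ?_
    · field_simp
    · rw [hadef, hbdef, hcdef, div_eq_div_iff
        (mul_pos (div_pos h₁ hν₂)
          (mul_pos (by linarith : (0:ℝ) < ν₂/2 - 1) (by linarith : (0:ℝ) < ν₂/2 - 2))).ne'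
        (mul_ne_zero h2 h4)]
      field_simp
      ring
  have h2' : ν₂ - 2 ≠ 0 := by intro h; rw [sub_eq_zero] at h; linarith
  have h4' : ν₂ - 4 ≠ 0 := by intro h; rw [sub_eq_zero] at h; linarith
  have hnum : ν₁ + ν₂ - 2 ≠ 0 := by intro h; nlinarith
  have V : (∫ x in Set.Ioi (0 : ℝ), x ^ 2 * ρ x) - (∫ x in Set.Ioi (0 : ℝ), x * ρ x) ^ 2
      = 2 * ν₂ ^ 2 * (ν₁ + ν₂ - 2) / (ν₁ * (ν₂ - 2) ^ 2 * (ν₂ - 4)) := by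
    rw [A1, A2]
    rw [div_pow, div_sub_div _ _ (mul_ne_zero (mul_ne_zero h₁.ne' h2') h4')
      (pow_ne_zero _ h2'), div_eq_div_iff
      (mul_ne_zero (mul_ne_zero (mul_ne_zero h₁.ne' h2') h4') (pow_ne_zero _ h2'))
      (mul_ne_zero (mul_ne_zero h₁.ne' (pow_ne_zero _ h2')) h4')]
    ring
  refine ⟨A1, V, A3, ?_, ?_⟩
  · rw [A3, V, div_eq_div_iff
      (div_ne_zero (mul_ne_zero (mul_ne_zero two_ne_zero (pow_ne_zero _ hν₂.ne')) hnum)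
        (mul_ne_zero (mul_ne_zero h₁.ne' (pow_ne_zero _ h2')) h4'))
      (mul_ne_zero two_ne_zero hν₂.ne')]
    field_simp
  · intro x hx
    have hx0 : (0:ℝ) < x := hx
    have hpx : (0:ℝ) < 1 + c*x := by positivity
    set p := a + b with hpdef
    -- f agrees near x with the smooth g
    have heq : (fun y => 2 * (y * (1 + c * y)) * ρ y)
        =ᶠ[nhds x] (fun y => 2 * c ^ a / Bv * (y ^ a * (1 + c*y) ^ (1-p))) := by
      filter_upwards [Ioi_mem_nhds hx0] with y hy
      have hy0 : (0:ℝ) < y := hy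
      have hpy : (0:ℝ) < 1 + c*y := by positivity
      have ey : y ^ a = y ^ (a-1) * y := by
        rw [rpow_split hy0 a (a-1) (by ring)]
      have e3y : (1 + c*y) ^ ((1:ℝ)-p) = (1 + c*y) * ((1 + c*y) ^ p)⁻¹ := by
        rw [show (1:ℝ)-p = 1 + -p by ring, Real.rpow_add hpy, Real.rpow_one,
          Real.rpow_neg hpy.le]
      rw [hρ' y, ey, e3y]
      have h1 : (1 + c*y) ^ p ≠ 0 := (Real.rpow_pos_of_pos hpy _).ne'
      field_simp [hν₂.ne']
    have hder : HasDerivAt (fun y => 2 * c ^ a / Bv * (y ^ a * (1 + c*y) ^ (1-p)))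
        (2 * c ^ a / Bv * (a * x ^ (a-1) * (1 + c*x) ^ (1-p)
          + x ^ a * (c * (1-p) * (1 + c*x) ^ (1-p-1)))) x := by
      have h1 : HasDerivAt (fun y : ℝ => y ^ a) (a * x ^ (a-1)) x :=
        Real.hasDerivAt_rpow_const (Or.inl hx0.ne')
      have h2 : HasDerivAt (fun y : ℝ => 1 + c*y) c x := by
        simpa using ((hasDerivAt_id x).const_mul c).const_add 1
      have h3 : HasDerivAt (fun y : ℝ => (1 + c*y) ^ (1-p))
          (c * (1-p) * (1 + c*x) ^ (1-p-1)) x :=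
        h2.rpow_const (Or.inl hpx.ne')
      exact (h1.mul h3).const_mul (2 * c ^ a / Bv)
    rw [heq.deriv_eq, hder.deriv]
    -- now pure algebra
    have e1 : x ^ a = x ^ (a-1) * x := by
      rw [rpow_split hx0 a (a-1) (by ring)]
    have e3 : (1 + c*x) ^ ((1:ℝ)-p) = (1 + c*x) * ((1 + c*x) ^ p)⁻¹ := by
      rw [show (1:ℝ)-p = 1 + -p by ring, Real.rpow_add hpx, Real.rpow_one,
        Real.rpow_neg hpx.le]
    have e4 : (1 + c*x) ^ ((1:ℝ)-p-1) = ((1 + c*x) ^ p)⁻¹ := by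
      rw [show (1:ℝ)-p-1 = -p by ring, Real.rpow_neg hpx.le]
    have hxa : x ^ (a-1) ≠ 0 := (Real.rpow_pos_of_pos hx0 _).ne'
    have hpp : ((1 + c*x) ^ p) ≠ 0 := (Real.rpow_pos_of_pos hpx _).ne'
    have hca : c ^ a ≠ 0 := (Real.rpow_pos_of_pos hc _).ne'
    have hρx : ρ x = c ^ a * x ^ (a-1) / (Bv * (1 + c*x) ^ p) := hρ' x
    rw [hρx, e1, e3, e4]
    refine Eq.trans (b := a * (1 + c*x) + (1-p) * (c*x)) ?_ ?_
    · field_simp [hν₂.ne']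
    · rw [hpdef, hadef, hbdef, hcdef]
      field_simp
      ring
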